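/- The Erdős–Rényi polarity graph ER_q has diameter 2: for any two distinct projective points v, w over F_q, there exists a projective point orthogonal to both. -/

import Mathlib

open Matrix

/-- The Erdős–Rényi polarity graph `ER_q` has diameter 2: for any two distinct points
of the projective plane `PG(2,q)` over a finite field `F` of order `q`, there exists a
projective point orthogonal to both (orthogonality of projective points being computed
on representative vectors via the dot product). -/
theorem stmt_6 {F : Type*} [Field F] [Fintype F]
    (v w : Projectivization F (Fin 3 → F)) (hvw : v ≠ w) :
    ∃ u : Projectivization F (Fin 3 → F),
      dotProduct u.rep v.rep = 0 ∧ dotProduct u.rep w.rep = 0 := by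
  have hind : LinearIndependent F ![v.rep, w.rep] := by
    have := (Projectivization.independent_pair_iff_ne v w).2 hvw
    rw [Projectivization.independent_iff] at this
    convert this using 1
    ext i
    fin_cases i <;> rfl
    rfl
  have hc : crossProduct v.rep w.rep ≠ 0 :=
    crossProduct_ne_zero_iff_linearIndependent.2 hind
  obtain ⟨a, ha⟩ := (Projectivization.mk_eq_mk_iff F _ _
    (Projectivization.rep_nonzero _) hc).1 (Projectivization.mk_rep _)
  refine ⟨Projectivization.mk F _ hc, ?_, ?_⟩
  · rw [← ha, smul_dotProduct, dotProduct_comm, dot_self_cross, smul_zero]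
  · rw [← ha, smul_dotProduct, dotProduct_comm, dot_cross_self, smul_zero]
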